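/- If H is a finite p-group, then Aut_p(H), the group of automorphisms of H acting trivially on H/([H,H]H^p), is a finite p-group. -/

import Mathlib

variable (p : ℕ) (H : Type*) [Group H]

/-- The verbal subgroup `K_p = [H,H]Hᵖ` generated by all commutators and all `p`-th
powers; the quotient `H/K_p` is the first mod-`p` homology of `H`. -/
def Kp : Subgroup H := commutator H ⊔ Subgroup.closure {x : H | ∃ g : H, g ^ p = x}

lemma Kp_map_le (α : MulAut H) : (Kp p H).map α.toMonoidHom ≤ Kp p H := by
  rw [Kp, Subgroup.map_sup]
  apply sup_le
  · refine le_trans (Subgroup.characteristic_iff_map_le.mp inferInstance α) le_sup_left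
  · rw [MonoidHom.map_closure]
    refine le_trans (Subgroup.closure_mono ?_) le_sup_right
    rintro x ⟨y, ⟨g, hg⟩, rfl⟩
    exact ⟨α g, by rw [← map_pow]; exact congrArg _ hg⟩

/-- The subgroup `Aut_p(H) ≤ Aut(H)` of automorphisms acting trivially on
`H / [H,H]Hᵖ`. -/
def AutP : Subgroup (MulAut H) where
  carrier := {α : MulAut H | ∀ h : H, h⁻¹ * α h ∈ Kp p H}
  one_mem' := by intro h; simpa using (Kp p H).one_mem
  mul_mem' := by
    intro α β hα hβ h
    have h1 : (h⁻¹ * α h) * (α (h⁻¹ * β h)) ∈ Kp p H := by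
      refine mul_mem (hα h) (Kp_map_le p H α ⟨_, hβ h, rfl⟩)
    simpa [map_mul, mul_assoc] using h1
  inv_mem' := by
    intro α hα h
    have h1 := hα (α⁻¹ h)
    have h2 : ((α⁻¹ h)⁻¹ * h)⁻¹ ∈ Kp p H := by
      refine inv_mem ?_
      simpa using h1
    simpa [mul_inv_rev] using h2

/-- In a finite `p`-group, `Kp` is contained in every maximal subgroup. -/
lemma Kp_le_of_coatom [Finite H] (hp : p.Prime) (hH : IsPGroup p H)
    {M : Subgroup H} (hM : IsCoatom M) : Kp p H ≤ M := by
  haveI : Fact p.Prime := ⟨hp⟩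
  have hnil : Group.IsNilpotent H := hH.isNilpotent
  haveI hMn : M.Normal :=
    Subgroup.NormalizerCondition.normal_of_coatom M normalizerCondition_of_isNilpotent hM
  set Q := H ⧸ M with hQdef
  have hQp : IsPGroup p Q := hH.to_quotient M
  -- every subgroup of Q is ⊥ or ⊤
  have htriv : ∀ N : Subgroup Q, N = ⊥ ∨ N = ⊤ := by
    intro N
    rcases eq_or_ne (N.comap (QuotientGroup.mk' M)) M with h | h
    · left
      rw [eq_bot_iff]
      intro x hx
      obtain ⟨y, rfl⟩ := QuotientGroup.mk'_surjective M x
      have hy : y ∈ N.comap (QuotientGroup.mk' M) := hx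
      rw [h] at hy
      simp only [Subgroup.mem_bot]
      exact (QuotientGroup.eq_one_iff y).mpr hy
    · right
      have hle : M ≤ N.comap (QuotientGroup.mk' M) := by
        intro m hm
        simpa [Subgroup.mem_comap, (QuotientGroup.eq_one_iff m).mpr hm] using N.one_mem
      have h2 := hM.2 _ (lt_of_le_of_ne hle (Ne.symm h))
      have h3 := congrArg (Subgroup.map (QuotientGroup.mk' M)) h2
      rwa [Subgroup.map_comap_eq_self_of_surjective (QuotientGroup.mk'_surjective M),
        Subgroup.map_top_of_surjective _ (QuotientGroup.mk'_surjective M)] at h3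
  -- Q is nontrivial
  obtain ⟨x0, hx0⟩ : ∃ x : H, x ∉ M := by
    by_contra hcon
    push_neg at hcon
    exact hM.1 (Subgroup.eq_top_iff' M |>.mpr hcon)
  set y : Q := (QuotientGroup.mk' M) x0 with hydef
  have hy0 : y ≠ 1 := fun h => hx0 ((QuotientGroup.eq_one_iff x0).mp h)
  -- y generates Q
  have hgen : Subgroup.zpowers y = ⊤ := by
    rcases htriv (Subgroup.zpowers y) with h | h
    · exact absurd (h ▸ Subgroup.mem_zpowers y) (by simp [hy0])
    · exact h
  -- y ^ p = 1
  have hyp : y ^ p = 1 := by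
    rcases htriv (Subgroup.zpowers (y ^ p)) with h | h
    · have := h ▸ Subgroup.mem_zpowers (y ^ p)
      simpa [Subgroup.mem_bot] using this
    · exfalso
      obtain ⟨k, hk⟩ := IsPGroup.iff_card.mp hQp
      have hcards : orderOf (y ^ p) = Nat.card Q := by
        rw [← Nat.card_zpowers, h, Subgroup.card_top]
      have hk1 : 1 ≤ k := by
        rcases Nat.eq_zero_or_pos k with rfl | hpos
        · exfalso
          have hone : Nat.card Q = 1 := by simpa using hk
          obtain ⟨a, ha⟩ := Nat.card_eq_one_iff_exists.mp hone
          exact hy0 ((ha y).trans (ha 1).symm)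
        · exact hpos
      have hpk : p * p ^ (k - 1) = p ^ k := by
        rw [← pow_succ']; congr 1; omega
      have hdvd : orderOf (y ^ p) ∣ p ^ (k - 1) := by
        apply orderOf_dvd_of_pow_eq_one
        rw [← pow_mul, hpk, ← hk, pow_card_eq_one']
      have hle : orderOf (y ^ p) ≤ p ^ (k - 1) :=
        Nat.le_of_dvd (pow_pos hp.pos _) hdvd
      have hlt : p ^ (k - 1) < p ^ k := Nat.pow_lt_pow_right hp.one_lt (by omega)
      omega
  -- Q is commutative since cyclic
  have hcomm : ∀ a b : Q, a * b = b * a := by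
    intro a b
    obtain ⟨m, hm⟩ := (hgen ▸ Subgroup.mem_top a : a ∈ Subgroup.zpowers y)
    obtain ⟨n, hn⟩ := (hgen ▸ Subgroup.mem_top b : b ∈ Subgroup.zpowers y)
    rw [← hm, ← hn, ← zpow_add, ← zpow_add, add_comm]
  -- exponent p
  have hexp : ∀ a : Q, a ^ p = 1 := by
    intro a
    obtain ⟨m, hm⟩ := (hgen ▸ Subgroup.mem_top a : a ∈ Subgroup.zpowers y)
    rw [← hm, ← zpow_natCast, ← zpow_mul, mul_comm, zpow_mul, zpow_natCast, hyp, one_zpow]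
  -- conclude
  rw [Kp]
  apply sup_le
  · rw [commutator_def, Subgroup.commutator_le]
    intro g _ h _
    have : (QuotientGroup.mk' M) (@Bracket.bracket H H commutatorElement g h) = 1 := by
      rw [map_commutatorElement]
      exact commutatorElement_eq_one_iff_commute.mpr (hcomm _ _)
    exact (QuotientGroup.eq_one_iff _).mp this
  · rw [Subgroup.closure_le]
    rintro x ⟨g, rfl⟩
    have : (QuotientGroup.mk' M) (g ^ p) = 1 := by
      rw [map_pow]; exact hexp _
    exact (QuotientGroup.eq_one_iff _).mp this

lemma Kp_le_frattini [Finite H] (hp : p.Prime) (hH : IsPGroup p H) :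
    Kp p H ≤ frattini H :=
  le_iInf₂ fun _M hM => Kp_le_of_coatom p H hp hH hM

/-- If an automorphism fixes pointwise some "coset section" of `H → H/Kp`,
then it is trivial (Burnside basis argument). -/
lemma fix_eq_one [Finite H] (hp : p.Prime) (hH : IsPGroup p H)
    (α : MulAut H) (f : H → H) (hf : ∀ h : H, h⁻¹ * f h ∈ Kp p H)
    (hfix : ∀ h : H, α (f h) = f h) : α = 1 := by
  have hsup : Subgroup.closure (Set.range f) ⊔ frattini H = ⊤ := by
    rw [eq_top_iff]
    intro h _
    have h1 : f h ∈ Subgroup.closure (Set.range f) := Subgroup.subset_closure ⟨h, rfl⟩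
    have h2 : (f h)⁻¹ * h ∈ frattini H := by
      refine Kp_le_frattini p H hp hH ?_
      simpa [mul_inv_rev] using inv_mem (hf h)
    have h3 : h = f h * ((f h)⁻¹ * h) := by group
    rw [h3]
    exact mul_mem (Subgroup.mem_sup_left h1) (Subgroup.mem_sup_right h2)
  have htop : Subgroup.closure (Set.range f) = ⊤ := frattini_nongenerating hsup
  have heq : Set.EqOn (α.toMonoidHom) (MonoidHom.id H) (Set.range f) := by
    rintro x ⟨h, rfl⟩
    exact hfix h
  have hcl := MonoidHom.eqOn_closure heq
  ext h
  exact hcl (htop ▸ Subgroup.mem_top h)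

section Action

variable [Finite H]

/-- The set of coset sections of `H → H/Kp`. -/
def XS : Type _ := {f : H → H // ∀ h : H, h⁻¹ * f h ∈ Kp p H}

instance : SMul (AutP p H) (XS p H) :=
  ⟨fun α f => ⟨fun h => α.1 (f.1 h), fun h => by
    have h1 : (h⁻¹ * f.1 h) * ((f.1 h)⁻¹ * α.1 (f.1 h)) ∈ Kp p H :=
      mul_mem (f.2 h) (α.2 (f.1 h))
    simpa [mul_assoc] using h1⟩⟩

lemma XS_smul_apply (α : AutP p H) (f : XS p H) (h : H) :
    (α • f).1 h = α.1 (f.1 h) := rfl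

instance : MulAction (AutP p H) (XS p H) where
  one_smul f := Subtype.ext (funext fun _h => rfl)
  mul_smul α β f := Subtype.ext (funext fun _h => rfl)

instance : Finite (XS p H) :=
  Finite.of_injective (fun f : XS p H => f.1) Subtype.val_injective

lemma XS_card (hp : p.Prime) (hH : IsPGroup p H) : ∃ n : ℕ, Nat.card (XS p H) = p ^ n := by
  haveI : Fact p.Prime := ⟨hp⟩
  have e : XS p H ≃ (H → Kp p H) :=
    { toFun := fun f => fun h => ⟨h⁻¹ * f.1 h, f.2 h⟩
      invFun := fun g => ⟨fun h => h * (g h).1, fun h => by simpa using (g h).2⟩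
      left_inv := fun f => Subtype.ext (funext fun h => by group)
      right_inv := fun g => funext fun h => Subtype.ext (by group) }
  obtain ⟨k, hk⟩ := IsPGroup.iff_card.mp (hH.to_subgroup (Kp p H))
  refine ⟨k * Nat.card H, ?_⟩
  rw [Nat.card_congr e, Nat.card_fun, hk, ← pow_mul]

end Action

/-- P. Hall's theorem: if `H` is a finite `p`-group, then `Aut_p(H)`, the group of
automorphisms of `H` acting trivially on `H/([H,H]Hᵖ)`, is a finite `p`-group. -/
theorem stmt15 (hp : p.Prime) [Finite H] (hH : IsPGroup p H) :
    Finite (AutP p H) ∧ IsPGroup p (AutP p H) := by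
  haveI : Fact p.Prime := ⟨hp⟩
  haveI : Finite (MulAut H) :=
    Finite.of_injective (fun (α : MulAut H) => (α : H → H)) DFunLike.coe_injective
  refine ⟨inferInstance, ?_⟩
  -- every prime dividing the order of `Aut_p(H)` is `p`
  have key : ∀ q : ℕ, q.Prime → q ∣ Nat.card (AutP p H) → q = p := by
    intro q hq hdvd
    haveI : Fact q.Prime := ⟨hq⟩
    obtain ⟨α, hα⟩ := exists_prime_orderOf_dvd_card' (G := AutP p H) q hdvd
    -- the cyclic subgroup generated by α is a q-group
    have hQ : IsPGroup q (Subgroup.zpowers α) := by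
      intro g
      refine ⟨1, ?_⟩
      obtain ⟨i, hi⟩ := g.2
      have hgq : (g : ↥(AutP p H)) ^ q = 1 := by
        rw [← hi, ← zpow_natCast, ← zpow_mul, mul_comm, zpow_mul, zpow_natCast,
          ← hα, pow_orderOf_eq_one, one_zpow]
      exact Subtype.ext (by simpa [pow_one] using hgq)
    have hmod := hQ.card_modEq_card_fixedPoints (XS p H)
    by_cases hfix : Nonempty (MulAction.fixedPoints (Subgroup.zpowers α) (XS p H))
    · -- a fixed point forces α = 1, contradicting orderOf α = q
      exfalso
      obtain ⟨⟨f, hf⟩⟩ := hfix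
      have hαf : α • f = f :=
        (MulAction.mem_fixedPoints.mp hf) ⟨α, Subgroup.mem_zpowers α⟩
      have h1 : (α : MulAut H) = 1 := by
        refine fix_eq_one p H hp hH α.1 f.1 f.2 fun h => ?_
        have := congrArg (fun g : XS p H => g.1 h) hαf
        simpa [XS_smul_apply] using this
      have : α = 1 := Subtype.ext h1
      rw [this, orderOf_one] at hα
      exact hq.ne_one hα.symm
    · -- no fixed points : q divides card XS = p ^ n
      haveI := not_nonempty_iff.mp hfix
      have h0 : Nat.card (MulAction.fixedPoints (Subgroup.zpowers α) (XS p H)) = 0 :=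
        Nat.card_of_isEmpty
      rw [h0] at hmod
      have hqd : q ∣ Nat.card (XS p H) := (Nat.modEq_zero_iff_dvd).mp hmod
      obtain ⟨n, hn⟩ := XS_card p H hp hH
      rw [hn] at hqd
      exact (Nat.prime_dvd_prime_iff_eq hq hp).mp (hq.dvd_of_dvd_pow hqd)
  have hpos : Nat.card (AutP p H) ≠ 0 := Nat.card_pos.ne'
  have := Nat.eq_prime_pow_of_unique_prime_dvd (p := p) hpos
    (fun {d} hd hdvd => key d hd hdvd)
  exact IsPGroup.of_card this
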